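/- Let g₁ := 2s(2s+t+3)/((s+1)(2s+2t+3)) and g₂ := 2t(s+2t+3)/((t+1)(2s+2t+3)) be elements of the rational function field ℂ(s,t). Then the subfield ℂ(g₁, g₂) of ℂ(s,t) is the whole field ℂ(s,t); that is, the rational map (s,t) ↦ (g₁(s,t), g₂(s,t)) is a birational isomorphism of ℂ² (equivalently of ℂℙ²). -/

import Mathlib

open MvPolynomial

set_option synthInstance.maxHeartbeats 1000000
set_option maxHeartbeats 4000000

/-- The field `ℂ(s,t)` of rational functions in two variables. -/
noncomputable abbrev RatFuncST : Type := FractionRing (MvPolynomial (Fin 2) ℂ)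

/-- The inclusion `ℂ[s,t] → ℂ(s,t)`. -/
noncomputable abbrev toRatFuncST : MvPolynomial (Fin 2) ℂ →+* RatFuncST :=
  algebraMap (MvPolynomial (Fin 2) ℂ) RatFuncST

/-- `g₁ = 2s(2s+t+3)/((s+1)(2s+2t+3)) ∈ ℂ(s,t)`, with `s = X 0`, `t = X 1`. -/
noncomputable def pentG1 : RatFuncST :=
  toRatFuncST (C 2 * X 0 * (C 2 * X 0 + X 1 + C 3)) /
    toRatFuncST ((X 0 + 1) * (C 2 * X 0 + C 2 * X 1 + C 3))

/-- `g₂ = 2t(s+2t+3)/((t+1)(2s+2t+3)) ∈ ℂ(s,t)`. -/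
noncomputable def pentG2 : RatFuncST :=
  toRatFuncST (C 2 * X 1 * (X 0 + C 2 * X 1 + C 3)) /
    toRatFuncST ((X 1 + 1) * (C 2 * X 0 + C 2 * X 1 + C 3))

lemma poly_ne_zero (p : MvPolynomial (Fin 2) ℂ) (h : eval (fun _ => (1:ℂ)) p ≠ 0) : p ≠ 0 :=
  fun hp => h (by simp [hp])

lemma hinj : Function.Injective toRatFuncST := IsFractionRing.injective _ _

lemma hd1 : toRatFuncST ((X 0 + 1) * (C 2 * X 0 + C 2 * X 1 + C 3)) ≠ 0 := by
  rw [map_ne_zero_iff _ hinj]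
  apply poly_ne_zero; simp
  try norm_num

lemma hd2 : toRatFuncST ((X 1 + 1) * (C 2 * X 0 + C 2 * X 1 + C 3)) ≠ 0 := by
  rw [map_ne_zero_iff _ hinj]
  apply poly_ne_zero; simp
  try norm_num

lemma key1 : toRatFuncST (X 0) * (2 * (pentG1 - 2) * (pentG1 + pentG2 - 3))
    = pentG1 * (6 - 2 * pentG1 - pentG2) := by
  have h1 := hd1; have h2 := hd2
  unfold pentG1 pentG2
  simp only [map_ofNat, map_mul, map_add, map_one] at h1 h2 ⊢
  generalize toRatFuncST (X 0) = a at h1 h2 ⊢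
  generalize toRatFuncST (X 1) = b at h1 h2 ⊢
  have ⟨h1a, h1b⟩ := mul_ne_zero_iff.mp h1
  have ⟨h2a, h2b⟩ := mul_ne_zero_iff.mp h2
  have h1c : 2 * (a + b) + 3 ≠ 0 := by rwa [mul_add]
  field_simp
  ring

lemma key2 : toRatFuncST (X 1) * (2 * (pentG2 - 2) * (pentG1 + pentG2 - 3))
    = pentG2 * (6 - pentG1 - 2 * pentG2) := by
  have h1 := hd1; have h2 := hd2
  unfold pentG1 pentG2
  simp only [map_ofNat, map_mul, map_add, map_one] at h1 h2 ⊢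
  generalize toRatFuncST (X 0) = a at h1 h2 ⊢
  generalize toRatFuncST (X 1) = b at h1 h2 ⊢
  have ⟨h1a, h1b⟩ := mul_ne_zero_iff.mp h1
  have ⟨h2a, h2b⟩ := mul_ne_zero_iff.mp h2
  have h1c : 2 * (a + b) + 3 ≠ 0 := by rwa [mul_add]
  field_simp
  ring

lemma sub21 : pentG1 - 2 ≠ 0 := by
  have : pentG1 - 2 = toRatFuncST (C 2 * X 0 * (C 2 * X 0 + X 1 + C 3)
      - 2 * ((X 0 + 1) * (C 2 * X 0 + C 2 * X 1 + C 3))) /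
      toRatFuncST ((X 0 + 1) * (C 2 * X 0 + C 2 * X 1 + C 3)) := by
    rw [eq_div_iff hd1, sub_mul]
    unfold pentG1
    rw [div_mul_cancel₀ _ hd1]
    simp only [map_sub, map_mul, map_ofNat, map_add, map_one]
    try ring
  rw [this]
  refine div_ne_zero ?_ hd1
  rw [map_ne_zero_iff _ hinj]
  apply poly_ne_zero; simp
  try norm_num

lemma sub22 : pentG2 - 2 ≠ 0 := by
  have : pentG2 - 2 = toRatFuncST (C 2 * X 1 * (X 0 + C 2 * X 1 + C 3)
      - 2 * ((X 1 + 1) * (C 2 * X 0 + C 2 * X 1 + C 3))) /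
      toRatFuncST ((X 1 + 1) * (C 2 * X 0 + C 2 * X 1 + C 3)) := by
    rw [eq_div_iff hd2, sub_mul]
    unfold pentG2
    rw [div_mul_cancel₀ _ hd2]
    simp only [map_sub, map_mul, map_ofNat, map_add, map_one]
    try ring
  rw [this]
  refine div_ne_zero ?_ hd2
  rw [map_ne_zero_iff _ hinj]
  apply poly_ne_zero; simp
  try norm_num

lemma sub3 : pentG1 + pentG2 - 3 ≠ 0 := by
  have hd12 : toRatFuncST (((X 0 + 1) * (C 2 * X 0 + C 2 * X 1 + C 3)) *
      ((X 1 + 1) * (C 2 * X 0 + C 2 * X 1 + C 3))) ≠ 0 := by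
    rw [map_mul]; exact mul_ne_zero hd1 hd2
  have : pentG1 + pentG2 - 3 =
      toRatFuncST (C 2 * X 0 * (C 2 * X 0 + X 1 + C 3) * ((X 1 + 1) * (C 2 * X 0 + C 2 * X 1 + C 3))
        + C 2 * X 1 * (X 0 + C 2 * X 1 + C 3) * ((X 0 + 1) * (C 2 * X 0 + C 2 * X 1 + C 3))
        - 3 * (((X 0 + 1) * (C 2 * X 0 + C 2 * X 1 + C 3)) *
            ((X 1 + 1) * (C 2 * X 0 + C 2 * X 1 + C 3)))) /
      toRatFuncST (((X 0 + 1) * (C 2 * X 0 + C 2 * X 1 + C 3)) *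
        ((X 1 + 1) * (C 2 * X 0 + C 2 * X 1 + C 3))) := by
    rw [eq_div_iff hd12]
    have h1 := hd1; have h2 := hd2
    unfold pentG1 pentG2
    simp only [map_sub, map_ofNat, map_mul, map_add, map_one] at h1 h2 ⊢
    generalize toRatFuncST (X 0) = a at h1 h2 ⊢
    generalize toRatFuncST (X 1) = b at h1 h2 ⊢
    have ⟨h1a, h1b⟩ := mul_ne_zero_iff.mp h1
    have ⟨h2a, h2b⟩ := mul_ne_zero_iff.mp h2
    have h1c : 2 * (a + b) + 3 ≠ 0 := by rwa [mul_add]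
    field_simp
  rw [this]
  refine div_ne_zero ?_ hd12
  rw [map_ne_zero_iff _ hinj]
  apply poly_ne_zero; simp
  try norm_num

lemma two_ne : (2 : RatFuncST) ≠ 0 := by
  have : (2 : RatFuncST) = toRatFuncST 2 := by simp only [map_ofNat]
  rw [this, map_ne_zero_iff _ hinj]
  apply poly_ne_zero; simp

/-- The subfield `ℂ(g₁, g₂)` of `ℂ(s,t)` generated over `ℂ` by
`g₁ = 2s(2s+t+3)/((s+1)(2s+2t+3))` and `g₂ = 2t(s+2t+3)/((t+1)(2s+2t+3))` is the whole
field `ℂ(s,t)`; that is, `(s,t) ↦ (g₁, g₂)` is a birational isomorphism of `ℂ²`. -/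
theorem pentagon_tuned_map_birational :
    IntermediateField.adjoin ℂ ({pentG1, pentG2} : Set RatFuncST) = ⊤ := by
  set K := IntermediateField.adjoin ℂ ({pentG1, pentG2} : Set RatFuncST) with hK
  have hg1 : pentG1 ∈ K := IntermediateField.subset_adjoin ℂ _ (by simp)
  have hg2 : pentG2 ∈ K := IntermediateField.subset_adjoin ℂ _ (by simp)
  have hE : 2 * (pentG1 - 2) * (pentG1 + pentG2 - 3) ≠ 0 :=
    mul_ne_zero (mul_ne_zero two_ne sub21) sub3
  have hE2 : 2 * (pentG2 - 2) * (pentG1 + pentG2 - 3) ≠ 0 :=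
    mul_ne_zero (mul_ne_zero two_ne sub22) sub3
  have h2K : (2 : RatFuncST) ∈ K := by
    have := IntermediateField.algebraMap_mem K (2 : ℂ)
    rwa [map_ofNat] at this
  have h3K : (3 : RatFuncST) ∈ K := by
    have := IntermediateField.algebraMap_mem K (3 : ℂ)
    rwa [map_ofNat] at this
  have h6K : (6 : RatFuncST) ∈ K := by
    have := IntermediateField.algebraMap_mem K (6 : ℂ)
    rwa [map_ofNat] at this
  have hX0 : toRatFuncST (X 0) ∈ K := by
    have : toRatFuncST (X 0) =
        pentG1 * (6 - 2 * pentG1 - pentG2) / (2 * (pentG1 - 2) * (pentG1 + pentG2 - 3)) := by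
      rw [eq_div_iff hE]; exact key1
    rw [this]
    exact div_mem (mul_mem hg1 (sub_mem (sub_mem h6K (mul_mem h2K hg1)) hg2))
      (mul_mem (mul_mem h2K (sub_mem hg1 h2K)) (sub_mem (add_mem hg1 hg2) h3K))
  have hX1 : toRatFuncST (X 1) ∈ K := by
    have : toRatFuncST (X 1) =
        pentG2 * (6 - pentG1 - 2 * pentG2) / (2 * (pentG2 - 2) * (pentG1 + pentG2 - 3)) := by
      rw [eq_div_iff hE2]; exact key2
    rw [this]
    exact div_mem (mul_mem hg2 (sub_mem (sub_mem h6K hg1) (mul_mem h2K hg2)))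
      (mul_mem (mul_mem h2K (sub_mem hg2 h2K)) (sub_mem (add_mem hg1 hg2) h3K))
  have hX : ∀ i : Fin 2, toRatFuncST (X i) ∈ K := by
    intro i; fin_cases i
    · exact hX0
    · exact hX1
  have hm : ∀ p : MvPolynomial (Fin 2) ℂ, toRatFuncST p ∈ K := by
    intro p
    induction p using MvPolynomial.induction_on with
    | C r =>
      rw [show toRatFuncST (C r) = algebraMap ℂ RatFuncST r from
        (IsScalarTower.algebraMap_apply ℂ (MvPolynomial (Fin 2) ℂ) RatFuncST r).symm]
      exact IntermediateField.algebraMap_mem K r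
    | add p q hp hq => rw [map_add]; exact add_mem hp hq
    | mul_X p i hp => rw [map_mul]; exact mul_mem hp (hX i)
  rw [eq_top_iff]
  rintro x -
  obtain ⟨p, q, -, rfl⟩ := IsFractionRing.div_surjective (A := MvPolynomial (Fin 2) ℂ) x
  exact div_mem (hm p) (hm q)
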